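/- Let D be a probability mass function on X, let f : X → Y, let S be a finite type, let U : X → PMF S and R : S → PMF Y. Then there exists a finite subset A ⊆ Y with |A| ≤ |S| such that the success probability Pr_{x∼D, y∼(U x).bind R}[y = f(x)], i.e., Σ_x D(x) · Σ_{s∈S} (U x)(s) · (R s)(f(x)), is at most Pr_{x∼D}[f(x) ∈ A]. -/

import Mathlib

open scoped ENNReal Classical

lemma exists_topk {Y : Type*} (p : Y → ℝ≥0∞) (hp : ∑' y, p y ≠ ⊤) (k : ℕ) :
    ∃ A : Finset Y, A.card ≤ k ∧ (∀ y ∉ A, ∀ a ∈ A, p y ≤ p a) ∧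
      (A.card < k → ∀ y ∉ A, p y = 0) := by
  induction k with
  | zero => exact ⟨∅, le_rfl, by simp, by simp⟩
  | succ k ih =>
    obtain ⟨A, hcard, hmax, hsmall⟩ := ih
    by_cases hlt : A.card < k
    · exact ⟨A, by omega, hmax, fun _ y hy => hsmall hlt y hy⟩
    have hAk : A.card = k := le_antisymm hcard (not_lt.mp hlt)
    by_cases hzero : ∀ y ∉ A, p y = 0
    · exact ⟨A, by omega, hmax, fun _ => hzero⟩
    push_neg at hzero
    obtain ⟨y1, hy1A, hy1⟩ := hzero
    -- the set of elements with p value ≥ p y1 is finite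
    have hfin : {y | p y1 ≤ p y}.Finite := ENNReal.finite_const_le_of_tsum_ne_top hp hy1
    set F : Finset Y := (hfin.toFinset.filter (fun y => y ∉ A))
    have hy1F : y1 ∈ F := by
      simp [F, Set.Finite.mem_toFinset, hy1A]
    obtain ⟨y0, hy0F, hy0max⟩ := F.exists_max_image p ⟨y1, hy1F⟩
    have hy0A : y0 ∉ A := by
      have := Finset.mem_filter.mp hy0F
      exact this.2
    refine ⟨insert y0 A, ?_, ?_, fun h => absurd h (by rw [Finset.card_insert_of_notMem hy0A]; omega)⟩
    · rw [Finset.card_insert_of_notMem hy0A]; omega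
    · intro y hy a ha
      have hyA : y ∉ A := fun h => hy (Finset.mem_insert_of_mem h)
      have hle0 : p y ≤ p y0 := by
        by_cases hyF : p y1 ≤ p y
        · exact hy0max y (by simp [F, Set.Finite.mem_toFinset, hyF, hyA])
        · have h1 : p y1 ≤ p y0 := by
            have := Finset.mem_filter.mp hy0F
            simpa [Set.Finite.mem_toFinset] using this.1
          exact le_trans (le_of_not_ge hyF) h1
      rcases Finset.mem_insert.mp ha with rfl | haA
      · exact hle0
      · exact hmax y hyA a haA

lemma split_tsum_finset {Y : Type*} (h : Y → ℝ≥0∞) (A : Finset Y) :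
    ∑' y, h y = ∑ y ∈ A, h y + ∑' y, (if y ∈ A then 0 else h y) := by
  have e : ∀ y, h y = (if y ∈ A then h y else 0) + (if y ∈ A then 0 else h y) := by
    intro y; by_cases hy : y ∈ A <;> simp [hy]
  rw [tsum_congr e, ENNReal.tsum_add,
    tsum_eq_sum (s := A) (f := fun y => if y ∈ A then h y else 0) (fun b hb => if_neg hb)]
  congr 1
  exact Finset.sum_congr rfl fun y hy => if_pos hy

lemma key_ineq {Y : Type*} (p g : Y → ℝ≥0∞) (hp : ∑' y, p y ≠ ⊤)
    (hg1 : ∀ y, g y ≤ 1) (k : ℕ) (hgk : ∑' y, g y ≤ k) :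
    ∃ A : Finset Y, A.card ≤ k ∧ ∑' y, p y * g y ≤ ∑ y ∈ A, p y := by
  obtain ⟨A, hcard, hmax, hsmall⟩ := exists_topk p hp k
  refine ⟨A, hcard, ?_⟩
  have hpne : ∀ y, p y ≠ ⊤ := fun y => ne_top_of_le_ne_top hp (ENNReal.le_tsum y)
  -- split the tsum
  have hsplit : ∑' y, p y * g y
      = ∑ y ∈ A, p y * g y + ∑' y, (if y ∈ A then 0 else p y * g y) :=
    split_tsum_finset _ A
  rw [hsplit]
  rcases lt_or_eq_of_le hcard with hlt | hEq
  · have : ∑' y, (if y ∈ A then 0 else p y * g y) = 0 := by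
      rw [ENNReal.tsum_eq_zero]
      intro y; by_cases h : y ∈ A <;> simp [h, hsmall hlt]
    rw [this, add_zero]
    exact Finset.sum_le_sum fun y _ => le_trans
      (mul_le_mul_right (hg1 y) (p y)) (by rw [mul_one])
  -- A.card = k
  by_cases hA : A.Nonempty
  case neg =>
    -- A empty so k = 0, so g sum ≤ 0
    have : A = ∅ := Finset.not_nonempty_iff_eq_empty.mp hA
    subst this
    simp only [Finset.card_empty] at hEq
    have hg0 : ∀ y, g y = 0 := by
      have := hgk; rw [← hEq] at this; simp only [Nat.cast_zero, nonpos_iff_eq_zero,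
        ENNReal.tsum_eq_zero] at this
      exact this
    simp [hg0]
  set m := A.inf' hA p with hm
  have hmle : ∀ a ∈ A, m ≤ p a := fun a ha => Finset.inf'_le p ha
  have hout : ∀ y ∉ A, p y ≤ m := by
    intro y hy
    obtain ⟨a0, ha0, ha0min⟩ := Finset.exists_mem_eq_inf' hA p
    rw [hm, ha0min]
    exact hmax y hy a0 ha0
  -- bound the outside sum
  have h1 : ∑' y, (if y ∈ A then 0 else p y * g y) ≤ m * ∑' y, (if y ∈ A then 0 else g y) := by
    rw [← ENNReal.tsum_mul_left]
    refine ENNReal.tsum_le_tsum fun y => ?_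
    by_cases h : y ∈ A
    · simp [h]
    · simp only [h, if_false]
      exact mul_le_mul_left (hout y h) _
  have h2 : ∑' y, (if y ∈ A then 0 else g y) ≤ (k : ℝ≥0∞) - ∑ y ∈ A, g y := by
    rw [split_tsum_finset g A] at hgk
    refine ENNReal.le_sub_of_add_le_left ?_ hgk
    refine (lt_of_le_of_lt (Finset.sum_le_sum fun y _ => hg1 y) ?_).ne
    simp only [Finset.sum_const, nsmul_eq_mul, mul_one]
    exact ENNReal.natCast_lt_top A.card
  have h3 : (k : ℝ≥0∞) - ∑ y ∈ A, g y ≤ ∑ y ∈ A, (1 - g y) := by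
    rw [tsub_le_iff_right]
    refine le_of_eq ?_
    calc (k : ℝ≥0∞) = ∑ y ∈ A, (1 : ℝ≥0∞) := by
          rw [Finset.sum_const, hEq]; simp [mul_comm]
      _ = ∑ y ∈ A, ((1 - g y) + g y) := by
          refine Finset.sum_congr rfl fun y _ => ?_
          rw [tsub_add_cancel_of_le (hg1 y)]
      _ = ∑ y ∈ A, (1 - g y) + ∑ y ∈ A, g y := Finset.sum_add_distrib
  have h4 : m * ∑ y ∈ A, (1 - g y) ≤ ∑ y ∈ A, p y * (1 - g y) := by
    rw [Finset.mul_sum]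
    exact Finset.sum_le_sum fun y hy => mul_le_mul_left (hmle y hy) _
  calc ∑ y ∈ A, p y * g y + ∑' y, (if y ∈ A then 0 else p y * g y)
      ≤ ∑ y ∈ A, p y * g y + m * ((k : ℝ≥0∞) - ∑ y ∈ A, g y) :=
        add_le_add_right (le_trans h1 (mul_le_mul_right h2 m)) _
    _ ≤ ∑ y ∈ A, p y * g y + ∑ y ∈ A, p y * (1 - g y) :=
        add_le_add_right (le_trans (mul_le_mul_right h3 m) h4) _
    _ = ∑ y ∈ A, (p y * g y + p y * (1 - g y)) := Finset.sum_add_distrib.symm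
    _ = ∑ y ∈ A, p y := by
        refine Finset.sum_congr rfl fun y hy => ?_
        rw [← mul_add, add_comm (g y), tsub_add_cancel_of_le (hg1 y), mul_one]

/-- For any finite-state generation model `(S, U, R)` and any PMF `D` on inputs, there is a
finite set `A` of outputs with `|A| ≤ |S|` such that the success probability
`∑_x D x * ∑_{s ∈ S} (U x) s * (R s) (f x)` is at most `Pr_{x ∼ D}[f x ∈ A]`. -/
theorem finite_state_model_success_le_prob_mem_finset {X Y : Type*} (D : PMF X) (f : X → Y)
    (S : Type*) [Fintype S] (U : X → PMF S) (R : S → PMF Y) :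
    ∃ A : Finset Y, A.card ≤ Fintype.card S ∧
      (∑' x, D x * ∑ s, U x s * R s (f x)) ≤ ∑' x, if f x ∈ A then D x else 0 := by
  set p : Y → ℝ≥0∞ := fun y => ∑' x, if f x = y then D x else 0 with hpdef
  set g : Y → ℝ≥0∞ := fun y => min 1 (∑ s, R s y) with hgdef
  have hp : ∑' y, p y ≠ ⊤ := by
    have : ∑' y, p y = 1 := by
      rw [hpdef, ENNReal.tsum_comm]
      rw [show ∑' (x : X) (y : Y), (if f x = y then D x else 0) = ∑' x, D x from
        tsum_congr fun x => by simp [eq_comm]]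
      exact D.tsum_coe
    rw [this]; exact ENNReal.one_ne_top
  have hg1 : ∀ y, g y ≤ 1 := fun y => min_le_left _ _
  have hgk : ∑' y, g y ≤ (Fintype.card S : ℝ≥0∞) := by
    calc ∑' y, g y ≤ ∑' y, ∑ s, R s y := ENNReal.tsum_le_tsum fun y => min_le_right _ _
      _ = ∑' y, ∑' s, R s y := tsum_congr fun y => (tsum_fintype _).symm
      _ = ∑' s, ∑' y, (R s) y := ENNReal.tsum_comm
      _ = ∑' (_ : S), (1 : ℝ≥0∞) := tsum_congr fun s => (R s).tsum_coe
      _ = (Fintype.card S : ℝ≥0∞) := by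
          rw [tsum_fintype]; simp
  obtain ⟨A, hcard, hkey⟩ := key_ineq p g hp hg1 (Fintype.card S) hgk
  refine ⟨A, hcard, ?_⟩
  have step1 : (∑' x, D x * ∑ s, U x s * R s (f x)) ≤ ∑' x, D x * g (f x) := by
    refine ENNReal.tsum_le_tsum fun x => mul_le_mul_right (le_min ?_ ?_) _
    · calc ∑ s, U x s * R s (f x) ≤ ∑ s, U x s :=
            Finset.sum_le_sum fun s _ => mul_le_of_le_one_right (zero_le) ((R s).coe_le_one _)
        _ = ∑' s, U x s := (tsum_fintype _).symm
        _ = 1 := (U x).tsum_coe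
    · exact Finset.sum_le_sum fun s _ => mul_le_of_le_one_left (zero_le) ((U x).coe_le_one _)
  have step2 : ∑' x, D x * g (f x) = ∑' y, p y * g y := by
    calc ∑' x, D x * g (f x) = ∑' x, ∑' y, (if f x = y then D x * g y else 0) :=
          tsum_congr fun x => by
            rw [show (∑' y, (if f x = y then D x * g y else 0)) = D x * g (f x) from
              tsum_eq_single (f x) (fun y hy => if_neg fun h => hy h.symm) |>.trans (if_pos rfl)]
      _ = ∑' y, ∑' x, (if f x = y then D x * g y else 0) := ENNReal.tsum_comm
      _ = ∑' y, p y * g y := tsum_congr fun y => by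
            rw [hpdef, ← ENNReal.tsum_mul_right]
            exact tsum_congr fun x => by by_cases h : f x = y <;> simp [h]
  have step3 : ∑ y ∈ A, p y = ∑' x, if f x ∈ A then D x else 0 := by
    rw [hpdef, ← Summable.tsum_finsetSum fun y _ => ENNReal.summable]
    exact tsum_congr fun x => Finset.sum_ite_eq A (f x) (fun _ => D x)
  calc (∑' x, D x * ∑ s, U x s * R s (f x)) ≤ ∑' x, D x * g (f x) := step1
    _ = ∑' y, p y * g y := step2
    _ ≤ ∑ y ∈ A, p y := hkey
    _ = ∑' x, if f x ∈ A then D x else 0 := step3
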